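/- Let N = 2 and p : (0,∞) → ℝ be nonnegative, non-increasing with p(a) > 0 for some a ∈ (0,1]. Then there exists w ∈ H¹(ℝ²) with (1/2)∫|∇w|² dx − (1/2)∫ p(|x|) w(x)² dx < 0. -/

import Mathlib

open MeasureTheory Real

noncomputable def chi : ℝ → ℝ := Real.smoothTransition

lemma chi_hasDerivAt (t : ℝ) : HasDerivAt chi (deriv chi t) t :=
  ((Real.smoothTransition.contDiff (n := 1)).differentiable (by simp)).differentiableAt.hasDerivAt

lemma chi_deriv_cont : Continuous (deriv chi) :=
  (Real.smoothTransition.contDiff (n := ⊤)).continuous_deriv (by exact_mod_cast le_top)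

lemma chi_deriv_neg {t : ℝ} (h : t < 0) : deriv chi t = 0 := by
  have : chi =ᶠ[nhds t] fun _ => 0 := by
    filter_upwards [Iio_mem_nhds h] with y hy
    exact Real.smoothTransition.zero_of_nonpos (le_of_lt hy)
  rw [this.deriv_eq, deriv_const]

lemma chi_deriv_gt {t : ℝ} (h : 1 < t) : deriv chi t = 0 := by
  have : chi =ᶠ[nhds t] fun _ => 1 := by
    filter_upwards [Ioi_mem_nhds h] with y hy
    exact Real.smoothTransition.one_of_one_le (le_of_lt hy)
  rw [this.deriv_eq, deriv_const]

lemma chi_deriv_bound : ∃ M : ℝ, 1 ≤ M ∧ ∀ t, |deriv chi t| ≤ M := by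
  obtain ⟨z, _, hz⟩ := isCompact_Icc.exists_isMaxOn (Set.nonempty_Icc.2 zero_le_one)
    (chi_deriv_cont.abs.continuousOn (s := Set.Icc (0:ℝ) 1))
  refine ⟨max 1 |deriv chi z|, le_max_left _ _, fun t => ?_⟩
  rcases lt_or_ge t 0 with h | h
  · rw [chi_deriv_neg h]; simp
  rcases le_or_gt t 1 with h' | h'
  · exact le_max_of_le_right (hz ⟨h, h'⟩)
  · rw [chi_deriv_gt h']; simp

lemma chi_nonneg (t : ℝ) : 0 ≤ chi t := Real.smoothTransition.nonneg t
lemma chi_le_one (t : ℝ) : chi t ≤ 1 := Real.smoothTransition.le_one t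
lemma chi_zero_of_nonpos {t : ℝ} (h : t ≤ 0) : chi t = 0 :=
  Real.smoothTransition.zero_of_nonpos h
lemma chi_one_of_one_le {t : ℝ} (h : 1 ≤ t) : chi t = 1 :=
  Real.smoothTransition.one_of_one_le h
lemma chi_abs_le_one (t : ℝ) : |chi t| ≤ 1 :=
  abs_le.2 ⟨by linarith [chi_nonneg t], chi_le_one t⟩

noncomputable def phi (L s : ℝ) : ℝ :=
  chi (Real.log s / L) * chi ((3 * L - Real.log s) / L)

noncomputable def psi (L s : ℝ) : ℝ :=
  deriv chi (Real.log s / L) * (s⁻¹ / L) * chi ((3 * L - Real.log s) / L) +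
    chi (Real.log s / L) * (deriv chi ((3 * L - Real.log s) / L) * (-(s⁻¹ / L)))

lemma phi_hasDerivAt {L s : ℝ} (hs : 0 < s) : HasDerivAt (phi L) (psi L s) s := by
  have hlog : HasDerivAt (fun s => Real.log s / L) (s⁻¹ / L) s :=
    (Real.hasDerivAt_log hs.ne').div_const L
  have hlog2 : HasDerivAt (fun s => (3 * L - Real.log s) / L) (-(s⁻¹ / L)) s := by
    simpa [neg_div] using ((hasDerivAt_const s (3*L)).sub (Real.hasDerivAt_log hs.ne')).div_const L
  have h1 : HasDerivAt (fun s => chi (Real.log s / L)) (deriv chi (Real.log s / L) * (s⁻¹ / L)) s :=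
    (chi_hasDerivAt _).comp s hlog
  have h2 : HasDerivAt (fun s => chi ((3 * L - Real.log s) / L))
      (deriv chi ((3 * L - Real.log s) / L) * (-(s⁻¹ / L))) s :=
    (chi_hasDerivAt _).comp s hlog2
  exact h1.mul h2

lemma phi_zero {L s : ℝ} (hL : 0 < L) (h0 : 0 ≤ s) (h1 : s ≤ 1) : phi L s = 0 := by
  have : Real.log s / L ≤ 0 :=
    div_nonpos_iff.2 (Or.inr ⟨Real.log_nonpos h0 h1, hL.le⟩)
  simp [phi, chi_zero_of_nonpos this]

lemma phi_zero' {L s : ℝ} (hL : 0 < L) (h : Real.exp (3 * L) ≤ s) : phi L s = 0 := by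
  have hs : 0 < s := lt_of_lt_of_le (Real.exp_pos _) h
  have hlog : 3 * L ≤ Real.log s := (Real.le_log_iff_exp_le hs).2 h
  have harg : (3 * L - Real.log s) / L ≤ 0 :=
    div_nonpos_iff.2 (Or.inr ⟨by linarith, hL.le⟩)
  simp [phi, chi_zero_of_nonpos harg]

lemma phi_one {L s : ℝ} (hL : 0 < L) (h1 : Real.exp L ≤ s) (h2 : s ≤ Real.exp (2 * L)) :
    phi L s = 1 := by
  have hs : 0 < s := lt_of_lt_of_le (Real.exp_pos _) h1
  have hls : L ≤ Real.log s := (Real.le_log_iff_exp_le hs).2 h1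
  have hls2 : Real.log s ≤ 2 * L := (Real.log_le_iff_le_exp hs).2 h2
  have e1 : (1:ℝ) ≤ Real.log s / L := (le_div_iff₀ hL).2 (by linarith)
  have e2 : (1:ℝ) ≤ (3 * L - Real.log s) / L := (le_div_iff₀ hL).2 (by linarith)
  simp [phi, chi_one_of_one_le e1, chi_one_of_one_le e2]

lemma psi_zero_lt {L s : ℝ} (hL : 0 < L) (h0 : 0 ≤ s) (h1 : s < 1) : psi L s = 0 := by
  rcases eq_or_lt_of_le h0 with h | h
  · simp [psi, ← h, Real.log_zero, chi_zero_of_nonpos le_rfl]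
  · have hlog : Real.log s < 0 := Real.log_neg h h1
    have : Real.log s / L < 0 := div_neg_of_neg_of_pos hlog hL
    simp [psi, chi_deriv_neg this, chi_zero_of_nonpos this.le]

lemma psi_zero_gt {L s : ℝ} (hL : 0 < L) (h : Real.exp (3 * L) < s) : psi L s = 0 := by
  have hs : 0 < s := (Real.exp_pos _).trans h
  have hlog : 3 * L < Real.log s := (Real.lt_log_iff_exp_lt hs).2 h
  have h1 : (1:ℝ) < Real.log s / L := by
    rw [lt_div_iff₀ hL]; nlinarith
  have h2 : (3 * L - Real.log s) / L < 0 := div_neg_of_neg_of_pos (by linarith) hL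
  simp [psi, chi_deriv_gt h1, chi_deriv_neg h2]

lemma psi_bound {L s : ℝ} {M : ℝ} (hL : 0 < L) (hs : 0 < s)
    (hM : ∀ t, |deriv chi t| ≤ M) : |psi L s| ≤ 2 * M * (s⁻¹ / L) := by
  have hsi : 0 < s⁻¹ / L := div_pos (inv_pos.2 hs) hL
  have hM0 : 0 ≤ M := le_trans (abs_nonneg _) (hM 0)
  have b1 : |deriv chi (Real.log s / L) * (s⁻¹ / L) * chi ((3 * L - Real.log s) / L)|
      ≤ M * (s⁻¹ / L) * 1 := by
    rw [abs_mul, abs_mul, abs_of_pos hsi]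
    exact mul_le_mul (mul_le_mul (hM _) le_rfl hsi.le hM0) (chi_abs_le_one _)
      (abs_nonneg _) (by positivity)
  have b2 : |chi (Real.log s / L) * (deriv chi ((3 * L - Real.log s) / L) * (-(s⁻¹ / L)))|
      ≤ 1 * (M * (s⁻¹ / L)) := by
    rw [abs_mul, abs_mul, abs_neg, abs_of_pos hsi]
    exact mul_le_mul (chi_abs_le_one _) (mul_le_mul (hM _) le_rfl hsi.le hM0)
      (by positivity) zero_le_one
  calc |psi L s| ≤ _ + _ := abs_add_le _ _
    _ ≤ M * (s⁻¹ / L) * 1 + 1 * (M * (s⁻¹ / L)) := add_le_add b1 b2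
    _ = 2 * M * (s⁻¹ / L) := by ring

lemma chi_cont : Continuous chi := Real.smoothTransition.continuous

lemma chi_deriv_zero : deriv chi 0 = 0 := by
  have hmem : (0:ℝ) ∈ closure (Set.Iio (0:ℝ)) := by
    rw [closure_Iio]
    exact Set.self_mem_Iic
  exact (Set.EqOn.closure (fun y (hy : y ∈ Set.Iio (0:ℝ)) => chi_deriv_neg hy)
    chi_deriv_cont continuous_const) hmem

lemma psi_zero_le {L s : ℝ} (hL : 0 < L) (h0 : 0 ≤ s) (h1 : s ≤ 1) : psi L s = 0 := by
  rcases lt_or_eq_of_le h1 with h | h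
  · exact psi_zero_lt hL h0 h
  · subst h
    simp [psi, Real.log_one, chi_deriv_zero, chi_zero_of_nonpos le_rfl]

lemma psi_zero_gt' {L s : ℝ} (hL : 0 < L) (h : Real.exp (3 * L) ≤ s) : psi L s = 0 := by
  rcases lt_or_eq_of_le h with h' | h'
  · exact psi_zero_gt hL h'
  · rw [← h']
    have h3 : (3 * L) / L = 3 := by field_simp
    simp [psi, Real.log_exp, h3, chi_deriv_gt (by norm_num : (1:ℝ) < 3), sub_self,
      chi_deriv_zero]


set_option maxHeartbeats 1000000 in
set_option synthInstance.maxHeartbeats 200000 in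
/-- for `N = 2` and `p` nonnegative, non-increasing with `p(a) > 0` for some
`a ∈ (0,1]`, there is `w ∈ H¹(ℝ²)` with `(1/2)∫|∇w|² − (1/2)∫ p(|x|)w² < 0`. -/
theorem stmt10 (p : ℝ → ℝ) (hp0 : ∀ r > (0:ℝ), 0 ≤ p r)
    (hpmono : AntitoneOn p (Set.Ioi (0:ℝ)))
    (a : ℝ) (ha : a ∈ Set.Ioc (0:ℝ) 1) (hpa : 0 < p a) :
    ∃ w : EuclideanSpace ℝ (Fin 2) → ℝ, MemLp w 2 volume ∧ Differentiable ℝ w ∧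
      MemLp (fun x => fderiv ℝ w x) 2 volume ∧
      Integrable (fun x => p ‖x‖ * (w x) ^ 2) volume ∧
      (1 / 2) * (∫ x, ‖fderiv ℝ w x‖ ^ 2) - (1 / 2) * (∫ x, p ‖x‖ * (w x) ^ 2) < 0 := by
  obtain ⟨ha0, ha1⟩ := ha
  obtain ⟨M, hM1, hM⟩ := chi_deriv_bound
  have hM0 : (0:ℝ) < M := lt_of_lt_of_le one_pos hM1
  set P := p a with hPdef
  have hP0 : 0 < P := hpa
  set L : ℝ := max 1 (200 * M ^ 2 / (P * a ^ 2)) with hLdef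
  have hL1 : (1:ℝ) ≤ L := le_max_left _ _
  have hL0 : (0:ℝ) < L := lt_of_lt_of_le one_pos hL1
  have hPa2 : 0 < P * a ^ 2 := by positivity
  have hL200 : 200 * M ^ 2 ≤ L * (P * a ^ 2) := by
    have hL2 : 200 * M ^ 2 / (P * a ^ 2) ≤ L := le_max_right _ _
    rw [div_le_iff₀ hPa2] at hL2; linarith
  set α : ℝ := a ^ 2 * Real.exp (-(2 * L)) with hαdef
  have hα0 : 0 < α := by positivity
  set sa : ℝ := Real.sqrt α with hsadef
  have hsa0 : 0 < sa := Real.sqrt_pos.2 hα0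
  set R₀ : ℝ := sa * Real.exp (3 * L / 2) with hR0def
  have hR00 : 0 < R₀ := by positivity
  have hsaR : sa ≤ R₀ := by
    nth_rewrite 1 [← mul_one sa]
    exact mul_le_mul_of_nonneg_left (Real.one_le_exp (by positivity)) hsa0.le
  have hsasq : sa ^ 2 = α := Real.sq_sqrt hα0.le
  have hR0sq : R₀ ^ 2 = α * Real.exp (3 * L) := by
    rw [hR0def, mul_pow, hsasq, pow_two, ← Real.exp_add]
    congr 2
    ring
  set w : EuclideanSpace ℝ (Fin 2) → ℝ := fun x => phi L (‖x‖ ^ 2 / α) with hwdef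
  set W' : EuclideanSpace ℝ (Fin 2) → (EuclideanSpace ℝ (Fin 2) →L[ℝ] ℝ) :=
    fun x => (psi L (‖x‖ ^ 2 / α) * (1 / α)) • ((2:ℕ) • innerSL ℝ x) with hWdef
  -- derivative
  have hderiv : ∀ x, HasFDerivAt w (W' x) x := by
    intro x
    rcases eq_or_ne x 0 with rfl | hx
    · have hW0 : W' 0 = 0 := by
        simp only [hWdef]
        rw [map_zero, smul_zero, smul_zero]
      rw [hW0]
      have hev : w =ᶠ[nhds (0 : EuclideanSpace ℝ (Fin 2))] fun _ => (0:ℝ) := by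
        filter_upwards [Metric.ball_mem_nhds (0 : EuclideanSpace ℝ (Fin 2)) hsa0] with y hy
        have hy' : ‖y‖ < sa := by simpa using hy
        have h2 : ‖y‖ ^ 2 < α := by
          calc ‖y‖ ^ 2 < sa ^ 2 := by gcongr
            _ = α := hsasq
        exact phi_zero hL0 (by positivity) ((div_le_one hα0).2 h2.le)
      exact (hasFDerivAt_const (0:ℝ) _).congr_of_eventuallyEq hev
    · have hq : 0 < ‖x‖ ^ 2 := by
        have := norm_pos_iff.2 hx
        positivity
      have ht0 : 0 < ‖x‖ ^ 2 / α := div_pos hq hα0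
      have h1 : HasDerivAt (fun s : ℝ => phi L (s / α)) (psi L (‖x‖ ^ 2 / α) * (1 / α)) (‖x‖ ^ 2) := by
        have := (phi_hasDerivAt (L := L) ht0).comp (‖x‖ ^ 2)
          ((hasDerivAt_id (‖x‖ ^ 2)).div_const α)
        exact this
      have h2 : HasFDerivAt (fun y : EuclideanSpace ℝ (Fin 2) => ‖y‖ ^ 2)
          ((2:ℕ) • innerSL ℝ x) x := (hasStrictFDerivAt_norm_sq x).hasFDerivAt
      have h3 := h1.comp_hasFDerivAt x h2
      exact h3
  have hdiff : Differentiable ℝ w := fun x => (hderiv x).differentiableAt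
  have hwcont : Continuous w := hdiff.continuous
  have hfderiv_eq : fderiv ℝ w = W' := funext fun x => (hderiv x).fderiv
  -- norm formula
  set g : ℝ → ℝ := fun r => (psi L (r ^ 2 / α) * (1 / α) * 2) ^ 2 * r ^ 2 with hgdef
  have hnorm : ∀ x, ‖W' x‖ ^ 2 = g ‖x‖ := by
    intro x
    have hrw : W' x = (psi L (‖x‖ ^ 2 / α) * (1 / α) * 2) • innerSL ℝ x := by
      simp only [hWdef]
      rw [← Nat.cast_smul_eq_nsmul ℝ 2 (innerSL ℝ x), smul_smul]
      norm_num
    have hns : ‖(psi L (‖x‖ ^ 2 / α) * (1 / α) * 2) • innerSL ℝ x‖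
        = |psi L (‖x‖ ^ 2 / α) * (1 / α) * 2| * ‖x‖ := by
      rw [show (psi L (‖x‖ ^ 2 / α) * (1 / α) * 2) • innerSL ℝ x
            = innerSL ℝ ((psi L (‖x‖ ^ 2 / α) * (1 / α) * 2) • x) from
          (map_smul (innerSL ℝ) _ x).symm, innerSL_apply_norm, norm_smul, Real.norm_eq_abs]
    simp only [hgdef]
    rw [hrw, hns, mul_pow, sq_abs]
  -- support facts
  have ht_gt : ∀ x : EuclideanSpace ℝ (Fin 2), R₀ ≤ ‖x‖ → Real.exp (3 * L) ≤ ‖x‖ ^ 2 / α := by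
    intro x hx
    rw [le_div_iff₀ hα0]
    calc Real.exp (3 * L) * α = R₀ ^ 2 := by rw [hR0sq]; ring
      _ ≤ ‖x‖ ^ 2 := by gcongr
  have hw_zero : ∀ x : EuclideanSpace ℝ (Fin 2), R₀ ≤ ‖x‖ → w x = 0 := fun x hx =>
    phi_zero' hL0 (ht_gt x hx)
  have hW'_zero : ∀ x : EuclideanSpace ℝ (Fin 2), R₀ ≤ ‖x‖ → W' x = 0 := by
    intro x hx
    simp only [hWdef]
    rw [psi_zero_gt' hL0 (ht_gt x hx), zero_mul, zero_smul]
  have hsupp_w : HasCompactSupport w := by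
    apply HasCompactSupport.intro (isCompact_closedBall (0 : EuclideanSpace ℝ (Fin 2)) R₀)
    intro x hx
    exact hw_zero x (le_of_lt (by simpa [Metric.mem_closedBall, dist_zero_right, not_le] using hx))
  have hsupp_W : HasCompactSupport W' := by
    apply HasCompactSupport.intro (isCompact_closedBall (0 : EuclideanSpace ℝ (Fin 2)) R₀)
    intro x hx
    exact hW'_zero x (le_of_lt (by simpa [Metric.mem_closedBall, dist_zero_right, not_le] using hx))
  have hmem1 : MemLp w 2 volume := hwcont.memLp_of_hasCompactSupport hsupp_w
  -- continuity of W'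
  have hψc : ∀ t : ℝ, 0 < t → ContinuousAt (psi L) t := by
    intro t ht
    have hlogc : ContinuousAt Real.log t := Real.continuousAt_log ht.ne'
    have hinvc : ContinuousAt (fun s : ℝ => s⁻¹ / L) t :=
      (continuousAt_inv₀ ht.ne').div_const L
    have harg1 : ContinuousAt (fun s : ℝ => Real.log s / L) t := hlogc.div_const L
    have harg2 : ContinuousAt (fun s : ℝ => (3 * L - Real.log s) / L) t :=
      (continuousAt_const.sub hlogc).div_const L
    exact (((chi_deriv_cont.continuousAt.comp harg1).mul hinvc).mul
        (chi_cont.continuousAt.comp harg2)).add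
      ((chi_cont.continuousAt.comp harg1).mul
        ((chi_deriv_cont.continuousAt.comp harg2).mul hinvc.neg))
  have hWcont : Continuous W' := by
    rw [continuous_iff_continuousAt]
    intro x
    rcases eq_or_ne x 0 with rfl | hx
    · have hev : W' =ᶠ[nhds (0 : EuclideanSpace ℝ (Fin 2))] fun _ => 0 := by
        filter_upwards [Metric.ball_mem_nhds (0 : EuclideanSpace ℝ (Fin 2)) hsa0] with y hy
        have hy' : ‖y‖ < sa := by simpa using hy
        have h2 : ‖y‖ ^ 2 < α := by
          calc ‖y‖ ^ 2 < sa ^ 2 := by gcongr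
            _ = α := hsasq
        have hψ0 : psi L (‖y‖ ^ 2 / α) = 0 :=
          psi_zero_le hL0 (by positivity) ((div_le_one hα0).2 h2.le)
        simp only [hWdef]
        rw [hψ0, zero_mul, zero_smul]
      rw [continuousAt_congr hev]
      exact continuousAt_const
    · have hq : (0:ℝ) < ‖x‖ ^ 2 := by
        have := norm_pos_iff.2 hx
        positivity
      have hscal : ContinuousAt (fun y : EuclideanSpace ℝ (Fin 2) =>
          psi L (‖y‖ ^ 2 / α) * (1 / α)) x := by
        refine ContinuousAt.mul ?_ continuousAt_const
        exact ContinuousAt.comp (f := fun y : EuclideanSpace ℝ (Fin 2) => ‖y‖ ^ 2 / α)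
          (hψc _ (div_pos hq hα0)) (((continuous_norm.pow 2).div_const α).continuousAt)
      have hmapc : Continuous (fun y : EuclideanSpace ℝ (Fin 2) => (2:ℕ) • innerSL ℝ y) :=
        ((innerSL ℝ).continuous).const_smul 2
      exact hscal.smul hmapc.continuousAt
  have hmem2 : MemLp (fun x => fderiv ℝ w x) 2 (volume : Measure (EuclideanSpace ℝ (Fin 2))) := by
    have : MemLp W' 2 (volume : Measure (EuclideanSpace ℝ (Fin 2))) :=
      hWcont.memLp_of_hasCompactSupport hsupp_W
    simpa [hfderiv_eq] using this
  -- potential integrability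
  set pc : ℝ → ℝ := fun r => p (max sa (min r R₀)) with hpcdef
  have hclamp_mem : ∀ r : ℝ, max sa (min r R₀) ∈ Set.Ioi (0:ℝ) := fun r =>
    Set.mem_Ioi.2 (lt_of_lt_of_le hsa0 (le_max_left _ _))
  have hpc_anti : Antitone pc := by
    intro r r' h
    exact hpmono (hclamp_mem r) (hclamp_mem r')
      (max_le_max le_rfl (min_le_min_right _ h))
  have hpc_meas : Measurable pc := hpc_anti.measurable
  have hw_supp_mem : ∀ x : EuclideanSpace ℝ (Fin 2), w x ≠ 0 → sa ≤ ‖x‖ ∧ ‖x‖ ≤ R₀ := by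
    intro x hx
    constructor
    · by_contra h
      push_neg at h
      have h2 : ‖x‖ ^ 2 < α := by
        calc ‖x‖ ^ 2 < sa ^ 2 := by gcongr
          _ = α := hsasq
      exact hx (phi_zero hL0 (by positivity) ((div_le_one hα0).2 h2.le))
    · by_contra h
      push_neg at h
      exact hx (hw_zero x h.le)
  have hclamp_eq : ∀ x : EuclideanSpace ℝ (Fin 2), w x ≠ 0 →
      max sa (min ‖x‖ R₀) = ‖x‖ := by
    intro x hx
    obtain ⟨h1, h2⟩ := hw_supp_mem x hx
    rw [min_eq_left h2, max_eq_right h1]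
  have hpot_eq : (fun x : EuclideanSpace ℝ (Fin 2) => p ‖x‖ * w x ^ 2)
      = fun x => pc ‖x‖ * w x ^ 2 := by
    funext x
    rcases eq_or_ne (w x) 0 with h | h
    · rw [h]; ring
    · simp only [hpcdef]
      rw [hclamp_eq x h]
  have hw2_int : Integrable (fun x : EuclideanSpace ℝ (Fin 2) => w x ^ 2) volume := by
    have hc : Continuous (fun x : EuclideanSpace ℝ (Fin 2) => w x ^ 2) := hwcont.pow 2
    have hs : HasCompactSupport (fun x : EuclideanSpace ℝ (Fin 2) => w x ^ 2) := by
      have := hsupp_w.comp_left (g := fun t : ℝ => t ^ 2) (by norm_num)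
      exact this
    exact hc.integrable_of_hasCompactSupport hs
  have hpot_int : Integrable (fun x : EuclideanSpace ℝ (Fin 2) => p ‖x‖ * w x ^ 2) volume := by
    rw [hpot_eq]
    have hmeas : AEStronglyMeasurable
        (fun x : EuclideanSpace ℝ (Fin 2) => pc ‖x‖ * w x ^ 2) volume :=
      ((hpc_meas.comp measurable_norm).mul ((hwcont.pow 2).measurable)).aestronglyMeasurable
    refine Integrable.mono' (hw2_int.const_mul (p sa)) hmeas ?_
    refine Filter.Eventually.of_forall fun x => ?_
    have h1 : 0 ≤ pc ‖x‖ := hp0 _ (hclamp_mem ‖x‖)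
    have h2 : pc ‖x‖ ≤ p sa := hpmono (Set.mem_Ioi.2 hsa0) (hclamp_mem ‖x‖) (le_max_left _ _)
    rw [Real.norm_eq_abs, abs_of_nonneg (mul_nonneg h1 (sq_nonneg _))]
    exact mul_le_mul_of_nonneg_right h2 (sq_nonneg _)
  -- polar coordinates
  have hfr : Module.finrank ℝ (EuclideanSpace ℝ (Fin 2)) = 2 := finrank_euclideanSpace_fin
  set B : ℝ := (volume (Metric.ball (0 : EuclideanSpace ℝ (Fin 2)) 1)).toReal with hBdef
  have hB0 : 0 < B :=
    ENNReal.toReal_pos (Metric.measure_ball_pos volume 0 one_pos).ne' measure_ball_lt_top.ne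
  have hDeq : ∫ x : EuclideanSpace ℝ (Fin 2), ‖fderiv ℝ w x‖ ^ 2
      = 2 * (B * ∫ r in Set.Ioi (0:ℝ), r * g r) := by
    have h1 : (fun x : EuclideanSpace ℝ (Fin 2) => ‖fderiv ℝ w x‖ ^ 2)
        = fun x => g ‖x‖ := by
      funext x
      rw [hfderiv_eq]
      exact hnorm x
    rw [h1]
    have h2 := integral_fun_norm_addHaar (volume : Measure (EuclideanSpace ℝ (Fin 2))) g
    rw [hfr] at h2
    simpa [smul_eq_mul, mul_assoc, hBdef, Measure.real] using h2
  -- Dirichlet bound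
  set C : ℝ := 16 * M ^ 2 / L ^ 2 with hCdef
  have hC0 : 0 < C := by positivity
  set h1d : ℝ → ℝ := Set.indicator (Set.Icc sa R₀) (fun r => C * r⁻¹) with hhdef
  have hIccsub : Set.Icc sa R₀ ⊆ Set.Ioi (0:ℝ) := fun r hr =>
    Set.mem_Ioi.2 (lt_of_lt_of_le hsa0 hr.1)
  have hpointwise : ∀ r ∈ Set.Ioi (0:ℝ), r * g r ≤ h1d r := by
    intro r hr
    have hr0 : (0:ℝ) < r := hr
    by_cases hmem : r ∈ Set.Icc sa R₀
    · rw [hhdef, Set.indicator_of_mem hmem]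
      have ht0 : 0 < r ^ 2 / α := by positivity
      have hb := psi_bound hL0 ht0 hM
      have key : g r ≤ C * r⁻¹ * r⁻¹ := by
        simp only [hgdef, hCdef]
        have habs : (psi L (r ^ 2 / α)) ^ 2 ≤ (2 * M * ((r ^ 2 / α)⁻¹ / L)) ^ 2 := by
          rw [← sq_abs (psi _ _)]
          exact pow_le_pow_left₀ (abs_nonneg _) hb 2
        calc (psi L (r ^ 2 / α) * (1 / α) * 2) ^ 2 * r ^ 2
            = (psi L (r ^ 2 / α)) ^ 2 * ((1 / α) * 2) ^ 2 * r ^ 2 := by ring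
          _ ≤ (2 * M * ((r ^ 2 / α)⁻¹ / L)) ^ 2 * ((1 / α) * 2) ^ 2 * r ^ 2 := by
              exact mul_le_mul_of_nonneg_right
                (mul_le_mul_of_nonneg_right habs (by positivity)) (sq_nonneg r)
          _ = 16 * M ^ 2 / L ^ 2 * r⁻¹ * r⁻¹ := by
              field_simp
              ring
      calc r * g r ≤ r * (C * r⁻¹ * r⁻¹) := by
            exact mul_le_mul_of_nonneg_left key hr0.le
        _ = C * r⁻¹ := by
            field_simp
    · rw [hhdef, Set.indicator_of_notMem hmem]
      have hψ0 : psi L (r ^ 2 / α) = 0 := by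
        rcases lt_or_ge r sa with h | hge
        · have h2 : r ^ 2 < α := by
            calc r ^ 2 < sa ^ 2 := by gcongr
              _ = α := hsasq
          exact psi_zero_lt hL0 (by positivity) ((div_lt_one hα0).2 h2)
        · have h : R₀ < r := by
            rcases le_or_gt r R₀ with h' | h'
            · exact absurd ⟨hge, h'⟩ hmem
            · exact h'
          apply psi_zero_gt hL0
          rw [lt_div_iff₀ hα0]
          calc Real.exp (3 * L) * α = R₀ ^ 2 := by rw [hR0sq]; ring
            _ < r ^ 2 := by gcongr
      simp only [hgdef]
      rw [hψ0]
      norm_num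
  have hh_int : Integrable h1d (volume.restrict (Set.Ioi (0:ℝ))) := by
    have hio : IntegrableOn (fun r : ℝ => C * r⁻¹) (Set.Icc sa R₀) volume := by
      apply ContinuousOn.integrableOn_Icc
      exact continuousOn_const.mul
        (ContinuousOn.inv₀ continuousOn_id fun x hx => (lt_of_lt_of_le hsa0 hx.1).ne')
    exact (hio.integrable_indicator measurableSet_Icc).integrableOn
  have hI1 : ∫ r in Set.Ioi (0:ℝ), r * g r ≤ 24 * M ^ 2 / L := by
    have step1 : ∫ r in Set.Ioi (0:ℝ), r * g r ≤ ∫ r in Set.Ioi (0:ℝ), h1d r := by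
      apply integral_mono_of_nonneg
      · rw [Filter.EventuallyLE, ae_restrict_iff' measurableSet_Ioi]
        refine Filter.Eventually.of_forall fun r hr => ?_
        have hr0 : (0:ℝ) < r := hr
        have : 0 ≤ g r := by
          simp only [hgdef]
          positivity
        positivity
      · exact hh_int
      · rw [Filter.EventuallyLE, ae_restrict_iff' measurableSet_Ioi]
        exact Filter.Eventually.of_forall hpointwise
    have step2 : ∫ r in Set.Ioi (0:ℝ), h1d r = C * Real.log (R₀ / sa) := by
      rw [hhdef, integral_indicator measurableSet_Icc,
        Measure.restrict_restrict measurableSet_Icc,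
        Set.inter_eq_self_of_subset_left hIccsub,
        integral_Icc_eq_integral_Ioc, ← intervalIntegral.integral_of_le hsaR,
        intervalIntegral.integral_const_mul, integral_inv_of_pos hsa0 hR00]
    have step3 : C * Real.log (R₀ / sa) = 24 * M ^ 2 / L := by
      have hqu : R₀ / sa = Real.exp (3 * L / 2) := by
        rw [hR0def, mul_comm]
        exact mul_div_cancel_right₀ _ hsa0.ne'
      rw [hqu, Real.log_exp, hCdef]
      field_simp
      ring
    calc ∫ r in Set.Ioi (0:ℝ), r * g r ≤ ∫ r in Set.Ioi (0:ℝ), h1d r := step1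
      _ = C * Real.log (R₀ / sa) := step2
      _ = 24 * M ^ 2 / L := step3
  -- potential lower bound
  set u : ℝ := a / Real.sqrt 2 with hudef
  have hsqrt2 : (1:ℝ) ≤ Real.sqrt 2 := by
    rw [show (1:ℝ) = Real.sqrt 1 by simp]
    exact Real.sqrt_le_sqrt (by norm_num)
  have hsqrt2pos : (0:ℝ) < Real.sqrt 2 := lt_of_lt_of_le one_pos hsqrt2
  have hu0 : 0 < u := by positivity
  have hua : u ≤ a := by
    rw [hudef, div_le_iff₀ hsqrt2pos]
    nlinarith
  have husq : u ^ 2 = a ^ 2 / 2 := by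
    rw [hudef, div_pow, Real.sq_sqrt (by norm_num : (0:ℝ) ≤ 2)]
  have h2expL : (2:ℝ) ≤ Real.exp L := by
    have h1 : (2:ℝ) ≤ Real.exp 1 := by
      have := Real.add_one_le_exp (1:ℝ)
      linarith
    calc (2:ℝ) ≤ Real.exp 1 := h1
      _ ≤ Real.exp L := Real.exp_le_exp.2 hL1
  have haα : a ^ 2 / α = Real.exp (2 * L) := by
    rw [hαdef, Real.exp_neg]
    field_simp
  have hplateau : ∀ x : EuclideanSpace ℝ (Fin 2), ‖x‖ ∈ Set.Icc u a → w x = 1 := by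
    intro x hx
    obtain ⟨h1, h2⟩ := hx
    have hn2 : ‖x‖ ^ 2 ≤ a ^ 2 := pow_le_pow_left₀ (norm_nonneg x) h2 2
    have hu2 : u ^ 2 ≤ ‖x‖ ^ 2 := pow_le_pow_left₀ hu0.le h1 2
    apply phi_one hL0
    · have h4 : u ^ 2 / α = Real.exp (2 * L) / 2 := by
        rw [husq, div_div, mul_comm (2:ℝ) α, ← div_div, haα]
      have h5 : Real.exp L ≤ Real.exp (2 * L) / 2 := by
        rw [le_div_iff₀ (by norm_num : (0:ℝ) < 2), show 2 * L = L + L by ring, Real.exp_add]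
        have h7 := mul_le_mul_of_nonneg_right h2expL (Real.exp_pos L).le
        linarith
      have h6 : u ^ 2 / α ≤ ‖x‖ ^ 2 / α := by gcongr
      rw [h4] at h6
      linarith
    · have h6 : ‖x‖ ^ 2 / α ≤ a ^ 2 / α := by gcongr
      rw [haα] at h6
      exact h6
  set f2 : ℝ → ℝ := Set.indicator (Set.Icc u a) (fun _ => P) with hf2def
  have hPot1 : ∫ x : EuclideanSpace ℝ (Fin 2), f2 ‖x‖
      ≤ ∫ x : EuclideanSpace ℝ (Fin 2), p ‖x‖ * w x ^ 2 := by
    apply integral_mono_of_nonneg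
    · refine Filter.Eventually.of_forall fun x => ?_
      simp only [hf2def]
      exact Set.indicator_nonneg (fun _ _ => hP0.le) _
    · exact hpot_int
    · refine Filter.Eventually.of_forall fun x => ?_
      by_cases hmem : ‖x‖ ∈ Set.Icc u a
      · simp only [hf2def]
        rw [Set.indicator_of_mem hmem, hplateau x hmem, one_pow, mul_one]
        exact hpmono (Set.mem_Ioi.2 (lt_of_lt_of_le hu0 hmem.1)) (Set.mem_Ioi.2 ha0) hmem.2
      · simp only [hf2def]
        rw [Set.indicator_of_notMem hmem]
        rcases eq_or_ne x 0 with rfl | hx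
        · have hw0 : w 0 = 0 := by
            show phi L (‖(0 : EuclideanSpace ℝ (Fin 2))‖ ^ 2 / α) = 0
            rw [norm_zero, show ((0:ℝ) ^ 2 / α) = 0 by simp]
            exact phi_zero hL0 le_rfl zero_le_one
          rw [hw0]
          simp
        · exact mul_nonneg (hp0 _ (norm_pos_iff.2 hx)) (sq_nonneg _)
  have hPot2 : ∫ x : EuclideanSpace ℝ (Fin 2), f2 ‖x‖
      = 2 * (B * ∫ r in Set.Ioi (0:ℝ), r * f2 r) := by
    have h2 := integral_fun_norm_addHaar (volume : Measure (EuclideanSpace ℝ (Fin 2))) f2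
    rw [hfr] at h2
    simpa [smul_eq_mul, mul_assoc, hBdef, Measure.real] using h2
  have hI2 : ∫ r in Set.Ioi (0:ℝ), r * f2 r = P * (a ^ 2 - u ^ 2) / 2 := by
    have hfun : (fun r : ℝ => r * f2 r)
        = Set.indicator (Set.Icc u a) (fun r => P * r) := by
      funext r
      simp only [hf2def]
      by_cases hmem : r ∈ Set.Icc u a
      · rw [Set.indicator_of_mem hmem, Set.indicator_of_mem hmem]
        exact mul_comm _ _
      · rw [Set.indicator_of_notMem hmem, Set.indicator_of_notMem hmem, mul_zero]
    rw [hfun, integral_indicator measurableSet_Icc,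
      Measure.restrict_restrict measurableSet_Icc,
      Set.inter_eq_self_of_subset_left (fun r hr => Set.mem_Ioi.2 (lt_of_lt_of_le hu0 hr.1)),
      integral_Icc_eq_integral_Ioc, ← intervalIntegral.integral_of_le hua,
      intervalIntegral.integral_const_mul, integral_id]
    ring
  refine ⟨w, hmem1, hdiff, hmem2, hpot_int, ?_⟩
  have hDle : ∫ x : EuclideanSpace ℝ (Fin 2), ‖fderiv ℝ w x‖ ^ 2
      ≤ 2 * (B * (24 * M ^ 2 / L)) := by
    rw [hDeq]
    have h3 : B * (∫ r in Set.Ioi (0:ℝ), r * g r) ≤ B * (24 * M ^ 2 / L) :=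
      mul_le_mul_of_nonneg_left hI1 hB0.le
    linarith only [h3]
  have hPge : B * (P * a ^ 2 / 2) ≤ ∫ x : EuclideanSpace ℝ (Fin 2), p ‖x‖ * w x ^ 2 := by
    have heq : P * (a ^ 2 - u ^ 2) / 2 = P * a ^ 2 / 4 := by
      rw [husq]
      ring
    have h4 := hPot1
    rw [hPot2, hI2, heq] at h4
    linarith only [h4]
  have hq1 : M ^ 2 / L ≤ P * a ^ 2 / 200 := by
    rw [div_le_div_iff₀ hL0 (by norm_num : (0:ℝ) < 200)]
    linarith only [hL200]
  have hq2 : 2 * (B * (24 * M ^ 2 / L)) = 48 * B * (M ^ 2 / L) := by ring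
  have hq3 : 48 * B * (M ^ 2 / L) ≤ 48 * B * (P * a ^ 2 / 200) :=
    mul_le_mul_of_nonneg_left hq1 (by positivity)
  have hq4 : 48 * B * (P * a ^ 2 / 200) < B * (P * a ^ 2 / 2) := by
    have hBP : 0 < B * (P * a ^ 2) := by positivity
    have e1 : 48 * B * (P * a ^ 2 / 200) = (6 / 25) * (B * (P * a ^ 2)) := by ring
    have e2 : B * (P * a ^ 2 / 2) = (1 / 2) * (B * (P * a ^ 2)) := by ring
    rw [e1, e2]
    exact mul_lt_mul_of_pos_right (by norm_num) hBP
  linarith only [hDle, hq2, hq3, hq4, hPge]
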